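/- Let N, M ≥ 2 be integers, P > 0, α > 0, and let I(θ) be the 4×4 Fisher information matrix with entries [I(θ)]_{jk} = 2 Re Σ_{n=0}^{N−1} Σ_{m=0}^{M−1} conj(∂s_{n,m}/∂θ_j)·(∂s_{n,m}/∂θ_k), where s_{n,m}(θ) = √P·α·exp(i(φ + 2πnf − 2πmt)) and θ = (α, φ, f, t). Then I(θ) is invertible and the (t,t) diagonal entry of its inverse, i.e., the Cramér-Rao lower bound on the variance of any unbiased estimator of the normalized delay t, equals [I(θ)⁻¹]_{tt} = 6 / ((2π)² α² P · N M (M² − 1)). -/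

import Mathlib

open Real Finset

/-- The noiseless OFDM radar observation `s_{n,m}(α,φ,f,t) = √P·α·exp(i(φ + 2πnf − 2πmt))`. -/
noncomputable def ofdmSig (P : ℝ) (α φ f t : ℝ) (n m : ℕ) : ℂ :=
  (Real.sqrt P : ℂ) * (α : ℂ) *
    Complex.exp (Complex.I * ((φ : ℂ) + 2 * (π : ℂ) * (n : ℂ) * (f : ℂ)
      - 2 * (π : ℂ) * (m : ℂ) * (t : ℂ)))

/-- Partial derivative of `s_{n,m}` with respect to the `j`-th parameter of
`θ = (α, φ, f, t)`. -/
noncomputable def ofdmDs (P : ℝ) (α φ f t : ℝ) (j : Fin 4) (n m : ℕ) : ℂ :=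
  match j with
  | 0 => deriv (fun a : ℝ => ofdmSig P a φ f t n m) α
  | 1 => deriv (fun p : ℝ => ofdmSig P α p f t n m) φ
  | 2 => deriv (fun fr : ℝ => ofdmSig P α φ fr t n m) f
  | 3 => deriv (fun ti : ℝ => ofdmSig P α φ f ti n m) t

/-- The 4×4 Fisher information matrix
`[I(θ)]_{jk} = 2 Re Σ_{n,m} conj(∂s_{n,m}/∂θ_j)·(∂s_{n,m}/∂θ_k)`. -/
noncomputable def ofdmFisher (N M : ℕ) (P : ℝ) (α φ f t : ℝ) :
    Matrix (Fin 4) (Fin 4) ℝ :=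
  Matrix.of fun j k =>
    2 * (∑ n ∈ Finset.range N, ∑ m ∈ Finset.range M,
      (starRingEnd ℂ) (ofdmDs P α φ f t j n m) * ofdmDs P α φ f t k n m).re

/-! ### Auxiliary lemmas -/

/-- The unit-modulus phase factor. -/
noncomputable def ofdmE (φ f t : ℝ) (n m : ℕ) : ℂ :=
  Complex.exp (Complex.I * ((φ : ℂ) + 2 * (π : ℂ) * (n : ℂ) * (f : ℂ)
      - 2 * (π : ℂ) * (m : ℂ) * (t : ℂ)))

lemma conjE_mul_E (φ f t : ℝ) (n m : ℕ) :
    (starRingEnd ℂ) (ofdmE φ f t n m) * ofdmE φ f t n m = 1 := by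
  rw [ofdmE, ← Complex.exp_conj, ← Complex.exp_add]
  have : (starRingEnd ℂ) (Complex.I * ((φ : ℂ) + 2 * (π : ℂ) * (n : ℂ) * (f : ℂ)
      - 2 * (π : ℂ) * (m : ℂ) * (t : ℂ))) + Complex.I * ((φ : ℂ) + 2 * (π : ℂ) * (n : ℂ) * (f : ℂ)
      - 2 * (π : ℂ) * (m : ℂ) * (t : ℂ)) = 0 := by
    simp only [map_mul, map_sub, map_add, Complex.conj_I, Complex.conj_ofReal,
      Complex.conj_natCast, map_ofNat]
    ring
  rw [this, Complex.exp_zero]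

lemma conj_mul_E (φ f t : ℝ) (n m : ℕ) (a b : ℂ) :
    (starRingEnd ℂ) (a * ofdmE φ f t n m) * (b * ofdmE φ f t n m) =
      (starRingEnd ℂ) a * b := by
  rw [map_mul]
  calc (starRingEnd ℂ) a * (starRingEnd ℂ) (ofdmE φ f t n m) * (b * ofdmE φ f t n m)
      = ((starRingEnd ℂ) a * b) * ((starRingEnd ℂ) (ofdmE φ f t n m) * ofdmE φ f t n m) := by
        ring
    _ = (starRingEnd ℂ) a * b := by rw [conjE_mul_E]; ring

section derivs
variable (P α φ f t : ℝ) (n m : ℕ)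

lemma ds0 : ofdmDs P α φ f t 0 n m = ((Real.sqrt P : ℝ) : ℂ) * ofdmE φ f t n m := by
  have h : HasDerivAt (fun a : ℝ => ofdmSig P a φ f t n m)
      ((Real.sqrt P : ℂ) * 1 * ofdmE φ f t n m) α := by
    simpa [ofdmSig, ofdmE] using
      ((Complex.ofRealCLM.hasDerivAt (x := α)).const_mul (Real.sqrt P : ℂ)).mul_const
        (ofdmE φ f t n m)
  simp [ofdmDs, h.deriv]

lemma ds1 : ofdmDs P α φ f t 1 n m =
    (Complex.I * ((Real.sqrt P * α : ℝ) : ℂ)) * ofdmE φ f t n m := by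
  have hin : HasDerivAt (fun p : ℝ => Complex.I * ((p : ℂ) + 2 * (π : ℂ) * (n : ℂ) * (f : ℂ)
      - 2 * (π : ℂ) * (m : ℂ) * (t : ℂ))) (Complex.I * 1) φ :=
    (((Complex.ofRealCLM.hasDerivAt (x := φ)).add_const _).sub_const _).const_mul _
  have h : HasDerivAt (fun p : ℝ => ofdmSig P α p f t n m)
      ((Real.sqrt P : ℂ) * (α : ℂ) * (ofdmE φ f t n m * (Complex.I * 1))) φ := by
    simpa [ofdmSig, ofdmE] using (hin.cexp).const_mul ((Real.sqrt P : ℂ) * (α : ℂ))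
  rw [ofdmDs, h.deriv]
  push_cast
  ring

lemma ds2 : ofdmDs P α φ f t 2 n m =
    (Complex.I * ((2 * π * n * (Real.sqrt P * α) : ℝ) : ℂ)) * ofdmE φ f t n m := by
  have hin : HasDerivAt (fun fr : ℝ => Complex.I * ((φ : ℂ) + 2 * (π : ℂ) * (n : ℂ) * (fr : ℂ)
      - 2 * (π : ℂ) * (m : ℂ) * (t : ℂ))) (Complex.I * (2 * (π:ℂ) * (n:ℂ))) f := by
    have : HasDerivAt (fun fr : ℝ => (φ : ℂ) + 2 * (π : ℂ) * (n : ℂ) * (fr : ℂ)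
        - 2 * (π : ℂ) * (m : ℂ) * (t : ℂ)) (2 * (π:ℂ) * (n:ℂ)) f := by
      simpa using
        ((((Complex.ofRealCLM.hasDerivAt (x := f)).const_mul (2 * (π:ℂ) * (n:ℂ))).const_add
          ((φ:ℂ))).sub_const (2 * (π : ℂ) * (m : ℂ) * (t : ℂ)))
    exact this.const_mul _
  have h : HasDerivAt (fun fr : ℝ => ofdmSig P α φ fr t n m)
      ((Real.sqrt P : ℂ) * (α : ℂ) * (ofdmE φ f t n m * (Complex.I * (2 * (π:ℂ) * (n:ℂ))))) f := by
    simpa [ofdmSig, ofdmE] using (hin.cexp).const_mul ((Real.sqrt P : ℂ) * (α : ℂ))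
  rw [ofdmDs, h.deriv]
  push_cast
  ring

lemma ds3 : ofdmDs P α φ f t 3 n m =
    (-(Complex.I * ((2 * π * m * (Real.sqrt P * α) : ℝ) : ℂ))) * ofdmE φ f t n m := by
  have hin : HasDerivAt (fun ti : ℝ => Complex.I * ((φ : ℂ) + 2 * (π : ℂ) * (n : ℂ) * (f : ℂ)
      - 2 * (π : ℂ) * (m : ℂ) * (ti : ℂ))) (Complex.I * (-(2 * (π:ℂ) * (m:ℂ)))) t := by
    have : HasDerivAt (fun ti : ℝ => (φ : ℂ) + 2 * (π : ℂ) * (n : ℂ) * (f : ℂ)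
        - 2 * (π : ℂ) * (m : ℂ) * (ti : ℂ)) (-(2 * (π:ℂ) * (m:ℂ))) t := by
      simpa using
        (((Complex.ofRealCLM.hasDerivAt (x := t)).const_mul (2 * (π:ℂ) * (m:ℂ))).const_sub
          ((φ:ℂ) + 2 * (π : ℂ) * (n : ℂ) * (f : ℂ)))
    exact this.const_mul _
  have h : HasDerivAt (fun ti : ℝ => ofdmSig P α φ f ti n m)
      ((Real.sqrt P : ℂ) * (α : ℂ) * (ofdmE φ f t n m * (Complex.I * (-(2 * (π:ℂ) * (m:ℂ)))))) t := by
    simpa [ofdmSig, ofdmE] using (hin.cexp).const_mul ((Real.sqrt P : ℂ) * (α : ℂ))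
  rw [ofdmDs, h.deriv]
  push_cast
  ring

end derivs

section products
variable {P : ℝ} (hP : 0 ≤ P) (α φ f t : ℝ) (n m : ℕ)

private lemma sqP (hP : 0 ≤ P) :
    ((Real.sqrt P : ℝ) : ℂ) * ((Real.sqrt P : ℝ) : ℂ) = ((P : ℝ) : ℂ) := by
  rw [← Complex.ofReal_mul, Real.mul_self_sqrt hP]

include hP

lemma p00 : (starRingEnd ℂ) (ofdmDs P α φ f t 0 n m) * ofdmDs P α φ f t 0 n m
    = ((P : ℝ) : ℂ) := by
  rw [ds0, conj_mul_E, Complex.conj_ofReal]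
  exact sqP hP

lemma p01 : (starRingEnd ℂ) (ofdmDs P α φ f t 0 n m) * ofdmDs P α φ f t 1 n m
    = ((P * α : ℝ) : ℂ) * Complex.I := by
  rw [ds0, ds1, conj_mul_E, Complex.conj_ofReal]
  push_cast
  linear_combination (Complex.I * (α : ℂ)) * sqP hP

lemma p10 : (starRingEnd ℂ) (ofdmDs P α φ f t 1 n m) * ofdmDs P α φ f t 0 n m
    = -(((P * α : ℝ) : ℂ) * Complex.I) := by
  rw [ds0, ds1, conj_mul_E, map_mul, Complex.conj_I, Complex.conj_ofReal]
  push_cast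
  linear_combination (-Complex.I * (α : ℂ)) * sqP hP

lemma p02 : (starRingEnd ℂ) (ofdmDs P α φ f t 0 n m) * ofdmDs P α φ f t 2 n m
    = ((2 * π * n * (P * α) : ℝ) : ℂ) * Complex.I := by
  rw [ds0, ds2, conj_mul_E, Complex.conj_ofReal]
  push_cast
  linear_combination (Complex.I * 2 * (π:ℂ) * (n:ℂ) * (α : ℂ)) * sqP hP

lemma p20 : (starRingEnd ℂ) (ofdmDs P α φ f t 2 n m) * ofdmDs P α φ f t 0 n m
    = -(((2 * π * n * (P * α) : ℝ) : ℂ) * Complex.I) := by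
  rw [ds0, ds2, conj_mul_E, map_mul, Complex.conj_I, Complex.conj_ofReal]
  push_cast
  linear_combination (-Complex.I * 2 * (π:ℂ) * (n:ℂ) * (α : ℂ)) * sqP hP

lemma p03 : (starRingEnd ℂ) (ofdmDs P α φ f t 0 n m) * ofdmDs P α φ f t 3 n m
    = -(((2 * π * m * (P * α) : ℝ) : ℂ) * Complex.I) := by
  rw [ds0, ds3, conj_mul_E, Complex.conj_ofReal]
  push_cast
  linear_combination (-Complex.I * 2 * (π:ℂ) * (m:ℂ) * (α : ℂ)) * sqP hP

lemma p30 : (starRingEnd ℂ) (ofdmDs P α φ f t 3 n m) * ofdmDs P α φ f t 0 n m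
    = ((2 * π * m * (P * α) : ℝ) : ℂ) * Complex.I := by
  rw [ds0, ds3, conj_mul_E, map_neg, map_mul, Complex.conj_I, Complex.conj_ofReal]
  push_cast
  linear_combination (Complex.I * 2 * (π:ℂ) * (m:ℂ) * (α : ℂ)) * sqP hP

lemma p11 : (starRingEnd ℂ) (ofdmDs P α φ f t 1 n m) * ofdmDs P α φ f t 1 n m
    = ((P * α ^ 2 : ℝ) : ℂ) := by
  rw [ds1, conj_mul_E, map_mul, Complex.conj_I, Complex.conj_ofReal]
  push_cast
  linear_combination (-Complex.I^2*(α:ℂ)^2) * sqP hP + (-(α:ℂ)^2*(P:ℂ)) * Complex.I_sq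

lemma p12 : (starRingEnd ℂ) (ofdmDs P α φ f t 1 n m) * ofdmDs P α φ f t 2 n m
    = ((2 * π * n * (P * α ^ 2) : ℝ) : ℂ) := by
  rw [ds1, ds2, conj_mul_E, map_mul, Complex.conj_I, Complex.conj_ofReal]
  push_cast
  linear_combination (-2*Complex.I^2*(π:ℂ)*(n:ℂ)*(α:ℂ)^2) * sqP hP + (-2*(π:ℂ)*(n:ℂ)*(α:ℂ)^2*(P:ℂ)) * Complex.I_sq

lemma p21 : (starRingEnd ℂ) (ofdmDs P α φ f t 2 n m) * ofdmDs P α φ f t 1 n m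
    = ((2 * π * n * (P * α ^ 2) : ℝ) : ℂ) := by
  rw [ds1, ds2, conj_mul_E, map_mul, Complex.conj_I, Complex.conj_ofReal]
  push_cast
  linear_combination (-2*Complex.I^2*(π:ℂ)*(n:ℂ)*(α:ℂ)^2) * sqP hP + (-2*(π:ℂ)*(n:ℂ)*(α:ℂ)^2*(P:ℂ)) * Complex.I_sq

lemma p13 : (starRingEnd ℂ) (ofdmDs P α φ f t 1 n m) * ofdmDs P α φ f t 3 n m
    = ((-(2 * π * m * (P * α ^ 2)) : ℝ) : ℂ) := by
  rw [ds1, ds3, conj_mul_E, map_mul, Complex.conj_I, Complex.conj_ofReal]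
  push_cast
  linear_combination (2*Complex.I^2*(π:ℂ)*(m:ℂ)*(α:ℂ)^2) * sqP hP + (2*(π:ℂ)*(m:ℂ)*(α:ℂ)^2*(P:ℂ)) * Complex.I_sq

lemma p31 : (starRingEnd ℂ) (ofdmDs P α φ f t 3 n m) * ofdmDs P α φ f t 1 n m
    = ((-(2 * π * m * (P * α ^ 2)) : ℝ) : ℂ) := by
  rw [ds1, ds3, conj_mul_E, map_neg, map_mul, Complex.conj_I, Complex.conj_ofReal]
  push_cast
  linear_combination (2*Complex.I^2*(π:ℂ)*(m:ℂ)*(α:ℂ)^2) * sqP hP + (2*(π:ℂ)*(m:ℂ)*(α:ℂ)^2*(P:ℂ)) * Complex.I_sq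

lemma p22 : (starRingEnd ℂ) (ofdmDs P α φ f t 2 n m) * ofdmDs P α φ f t 2 n m
    = (((2 * π * n) ^ 2 * (P * α ^ 2) : ℝ) : ℂ) := by
  rw [ds2, conj_mul_E, map_mul, Complex.conj_I, Complex.conj_ofReal]
  push_cast
  linear_combination (-4*Complex.I^2*(π:ℂ)^2*(n:ℂ)^2*(α:ℂ)^2) * sqP hP + (-4*(π:ℂ)^2*(n:ℂ)^2*(α:ℂ)^2*(P:ℂ)) * Complex.I_sq

lemma p23 : (starRingEnd ℂ) (ofdmDs P α φ f t 2 n m) * ofdmDs P α φ f t 3 n m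
    = ((-((2 * π * n) * (2 * π * m) * (P * α ^ 2)) : ℝ) : ℂ) := by
  rw [ds2, ds3, conj_mul_E, map_mul, Complex.conj_I, Complex.conj_ofReal]
  push_cast
  linear_combination (4*Complex.I^2*(π:ℂ)^2*(n:ℂ)*(m:ℂ)*(α:ℂ)^2) * sqP hP + (4*(π:ℂ)^2*(n:ℂ)*(m:ℂ)*(α:ℂ)^2*(P:ℂ)) * Complex.I_sq

lemma p32 : (starRingEnd ℂ) (ofdmDs P α φ f t 3 n m) * ofdmDs P α φ f t 2 n m
    = ((-((2 * π * n) * (2 * π * m) * (P * α ^ 2)) : ℝ) : ℂ) := by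
  rw [ds2, ds3, conj_mul_E, map_neg, map_mul, Complex.conj_I, Complex.conj_ofReal]
  push_cast
  linear_combination (4*Complex.I^2*(π:ℂ)^2*(n:ℂ)*(m:ℂ)*(α:ℂ)^2) * sqP hP + (4*(π:ℂ)^2*(n:ℂ)*(m:ℂ)*(α:ℂ)^2*(P:ℂ)) * Complex.I_sq

lemma p33 : (starRingEnd ℂ) (ofdmDs P α φ f t 3 n m) * ofdmDs P α φ f t 3 n m
    = (((2 * π * m) ^ 2 * (P * α ^ 2) : ℝ) : ℂ) := by
  rw [ds3, conj_mul_E, map_neg, map_mul, Complex.conj_I, Complex.conj_ofReal]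
  push_cast
  linear_combination (-4*Complex.I^2*(π:ℂ)^2*(m:ℂ)^2*(α:ℂ)^2) * sqP hP + (-4*(π:ℂ)^2*(m:ℂ)^2*(α:ℂ)^2*(P:ℂ)) * Complex.I_sq

end products

/-! ### Real summation lemmas -/

lemma sum_pow0 (K : ℕ) : ∑ i ∈ Finset.range K, ((i:ℝ))^0 = (K:ℝ) := by
  simp

lemma sum_pow1 (K : ℕ) : ∑ i ∈ Finset.range K, ((i:ℝ))^1 = (K:ℝ)*((K:ℝ)-1)/2 := by
  induction K with
  | zero => simp
  | succ k ih => rw [Finset.sum_range_succ, ih]; push_cast; ring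

lemma sum_pow2 (K : ℕ) : ∑ i ∈ Finset.range K, ((i:ℝ))^2
    = (K:ℝ)*((K:ℝ)-1)*(2*(K:ℝ)-1)/6 := by
  induction K with
  | zero => simp
  | succ k ih => rw [Finset.sum_range_succ, ih]; push_cast; ring

lemma dsum_nm (N M : ℕ) (c : ℝ) (i j : ℕ) :
    ∑ n ∈ Finset.range N, ∑ m ∈ Finset.range M, c * (n:ℝ)^i * (m:ℝ)^j
      = c * (∑ n ∈ Finset.range N, (n:ℝ)^i) * (∑ m ∈ Finset.range M, (m:ℝ)^j) := by
  calc ∑ n ∈ Finset.range N, ∑ m ∈ Finset.range M, c * (n:ℝ)^i * (m:ℝ)^j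
      = ∑ n ∈ Finset.range N, (c * (n:ℝ)^i * ∑ m ∈ Finset.range M, (m:ℝ)^j) := by
        simp_rw [← Finset.mul_sum]
    _ = (∑ n ∈ Finset.range N, c * (n:ℝ)^i) * ∑ m ∈ Finset.range M, (m:ℝ)^j := by
        rw [← Finset.sum_mul]
    _ = c * (∑ n ∈ Finset.range N, (n:ℝ)^i) * ∑ m ∈ Finset.range M, (m:ℝ)^j := by
        rw [← Finset.mul_sum]

/-! ### The Fisher matrix entries -/

section entries
variable (N M : ℕ) {P : ℝ} (hP : 0 ≤ P) (α φ f t : ℝ)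
include hP

lemma e00 : ofdmFisher N M P α φ f t 0 0 = 2*(N:ℝ)*(M:ℝ)*P := by
  simp only [ofdmFisher, Matrix.of_apply]
  rw [show (∑ n ∈ Finset.range N, ∑ m ∈ Finset.range M,
      (starRingEnd ℂ) (ofdmDs P α φ f t 0 n m) * ofdmDs P α φ f t 0 n m)
      = ((∑ n ∈ Finset.range N, ∑ m ∈ Finset.range M, P * (n:ℝ)^0 * (m:ℝ)^0 : ℝ) : ℂ) by
    push_cast
    exact Finset.sum_congr rfl fun n _ => Finset.sum_congr rfl fun m _ => by
      rw [p00 hP]; push_cast; ring]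
  rw [Complex.ofReal_re, dsum_nm, sum_pow0, sum_pow0]; ring

lemma e11 : ofdmFisher N M P α φ f t 1 1 = 2*(N:ℝ)*(M:ℝ)*(P*α^2) := by
  simp only [ofdmFisher, Matrix.of_apply]
  rw [show (∑ n ∈ Finset.range N, ∑ m ∈ Finset.range M,
      (starRingEnd ℂ) (ofdmDs P α φ f t 1 n m) * ofdmDs P α φ f t 1 n m)
      = ((∑ n ∈ Finset.range N, ∑ m ∈ Finset.range M, (P*α^2) * (n:ℝ)^0 * (m:ℝ)^0 : ℝ) : ℂ) by
    push_cast
    exact Finset.sum_congr rfl fun n _ => Finset.sum_congr rfl fun m _ => by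
      rw [p11 hP]; push_cast; ring]
  rw [Complex.ofReal_re, dsum_nm, sum_pow0, sum_pow0]; ring

lemma e12 : ofdmFisher N M P α φ f t 1 2 = 2*π*(P*α^2)*(M:ℝ)*((N:ℝ)*((N:ℝ)-1)) := by
  simp only [ofdmFisher, Matrix.of_apply]
  rw [show (∑ n ∈ Finset.range N, ∑ m ∈ Finset.range M,
      (starRingEnd ℂ) (ofdmDs P α φ f t 1 n m) * ofdmDs P α φ f t 2 n m)
      = ((∑ n ∈ Finset.range N, ∑ m ∈ Finset.range M, (2*π*(P*α^2)) * (n:ℝ)^1 * (m:ℝ)^0 : ℝ) : ℂ) by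
    push_cast
    exact Finset.sum_congr rfl fun n _ => Finset.sum_congr rfl fun m _ => by
      rw [p12 hP]; push_cast; ring]
  rw [Complex.ofReal_re, dsum_nm, sum_pow1, sum_pow0]; ring

lemma e21 : ofdmFisher N M P α φ f t 2 1 = 2*π*(P*α^2)*(M:ℝ)*((N:ℝ)*((N:ℝ)-1)) := by
  simp only [ofdmFisher, Matrix.of_apply]
  rw [show (∑ n ∈ Finset.range N, ∑ m ∈ Finset.range M,
      (starRingEnd ℂ) (ofdmDs P α φ f t 2 n m) * ofdmDs P α φ f t 1 n m)
      = ((∑ n ∈ Finset.range N, ∑ m ∈ Finset.range M, (2*π*(P*α^2)) * (n:ℝ)^1 * (m:ℝ)^0 : ℝ) : ℂ) by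
    push_cast
    exact Finset.sum_congr rfl fun n _ => Finset.sum_congr rfl fun m _ => by
      rw [p21 hP]; push_cast; ring]
  rw [Complex.ofReal_re, dsum_nm, sum_pow1, sum_pow0]; ring

lemma e13 : ofdmFisher N M P α φ f t 1 3 = -(2*π*(P*α^2)*(N:ℝ)*((M:ℝ)*((M:ℝ)-1))) := by
  simp only [ofdmFisher, Matrix.of_apply]
  rw [show (∑ n ∈ Finset.range N, ∑ m ∈ Finset.range M,
      (starRingEnd ℂ) (ofdmDs P α φ f t 1 n m) * ofdmDs P α φ f t 3 n m)
      = ((∑ n ∈ Finset.range N, ∑ m ∈ Finset.range M, (-(2*π*(P*α^2))) * (n:ℝ)^0 * (m:ℝ)^1 : ℝ) : ℂ) by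
    push_cast
    exact Finset.sum_congr rfl fun n _ => Finset.sum_congr rfl fun m _ => by
      rw [p13 hP]; push_cast; ring]
  rw [Complex.ofReal_re, dsum_nm, sum_pow0, sum_pow1]; ring

lemma e31 : ofdmFisher N M P α φ f t 3 1 = -(2*π*(P*α^2)*(N:ℝ)*((M:ℝ)*((M:ℝ)-1))) := by
  simp only [ofdmFisher, Matrix.of_apply]
  rw [show (∑ n ∈ Finset.range N, ∑ m ∈ Finset.range M,
      (starRingEnd ℂ) (ofdmDs P α φ f t 3 n m) * ofdmDs P α φ f t 1 n m)
      = ((∑ n ∈ Finset.range N, ∑ m ∈ Finset.range M, (-(2*π*(P*α^2))) * (n:ℝ)^0 * (m:ℝ)^1 : ℝ) : ℂ) by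
    push_cast
    exact Finset.sum_congr rfl fun n _ => Finset.sum_congr rfl fun m _ => by
      rw [p31 hP]; push_cast; ring]
  rw [Complex.ofReal_re, dsum_nm, sum_pow0, sum_pow1]; ring

lemma e22 : ofdmFisher N M P α φ f t 2 2 = (2*π)^2*(P*α^2)*(M:ℝ)*((N:ℝ)*((N:ℝ)-1)*(2*(N:ℝ)-1))/3 := by
  simp only [ofdmFisher, Matrix.of_apply]
  rw [show (∑ n ∈ Finset.range N, ∑ m ∈ Finset.range M,
      (starRingEnd ℂ) (ofdmDs P α φ f t 2 n m) * ofdmDs P α φ f t 2 n m)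
      = ((∑ n ∈ Finset.range N, ∑ m ∈ Finset.range M, ((2*π)^2*(P*α^2)) * (n:ℝ)^2 * (m:ℝ)^0 : ℝ) : ℂ) by
    push_cast
    exact Finset.sum_congr rfl fun n _ => Finset.sum_congr rfl fun m _ => by
      rw [p22 hP]; push_cast; ring]
  rw [Complex.ofReal_re, dsum_nm, sum_pow2, sum_pow0]; ring

lemma e23 : ofdmFisher N M P α φ f t 2 3 = -((2*π)^2*(P*α^2)*((N:ℝ)*((N:ℝ)-1))*((M:ℝ)*((M:ℝ)-1))/2) := by
  simp only [ofdmFisher, Matrix.of_apply]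
  rw [show (∑ n ∈ Finset.range N, ∑ m ∈ Finset.range M,
      (starRingEnd ℂ) (ofdmDs P α φ f t 2 n m) * ofdmDs P α φ f t 3 n m)
      = ((∑ n ∈ Finset.range N, ∑ m ∈ Finset.range M, (-((2*π)^2*(P*α^2))) * (n:ℝ)^1 * (m:ℝ)^1 : ℝ) : ℂ) by
    push_cast
    exact Finset.sum_congr rfl fun n _ => Finset.sum_congr rfl fun m _ => by
      rw [p23 hP]; push_cast; ring]
  rw [Complex.ofReal_re, dsum_nm, sum_pow1, sum_pow1]; ring

lemma e32 : ofdmFisher N M P α φ f t 3 2 = -((2*π)^2*(P*α^2)*((N:ℝ)*((N:ℝ)-1))*((M:ℝ)*((M:ℝ)-1))/2) := by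
  simp only [ofdmFisher, Matrix.of_apply]
  rw [show (∑ n ∈ Finset.range N, ∑ m ∈ Finset.range M,
      (starRingEnd ℂ) (ofdmDs P α φ f t 3 n m) * ofdmDs P α φ f t 2 n m)
      = ((∑ n ∈ Finset.range N, ∑ m ∈ Finset.range M, (-((2*π)^2*(P*α^2))) * (n:ℝ)^1 * (m:ℝ)^1 : ℝ) : ℂ) by
    push_cast
    exact Finset.sum_congr rfl fun n _ => Finset.sum_congr rfl fun m _ => by
      rw [p32 hP]; push_cast; ring]
  rw [Complex.ofReal_re, dsum_nm, sum_pow1, sum_pow1]; ring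

lemma e33 : ofdmFisher N M P α φ f t 3 3 = (2*π)^2*(P*α^2)*(N:ℝ)*((M:ℝ)*((M:ℝ)-1)*(2*(M:ℝ)-1))/3 := by
  simp only [ofdmFisher, Matrix.of_apply]
  rw [show (∑ n ∈ Finset.range N, ∑ m ∈ Finset.range M,
      (starRingEnd ℂ) (ofdmDs P α φ f t 3 n m) * ofdmDs P α φ f t 3 n m)
      = ((∑ n ∈ Finset.range N, ∑ m ∈ Finset.range M, ((2*π)^2*(P*α^2)) * (n:ℝ)^0 * (m:ℝ)^2 : ℝ) : ℂ) by
    push_cast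
    exact Finset.sum_congr rfl fun n _ => Finset.sum_congr rfl fun m _ => by
      rw [p33 hP]; push_cast; ring]
  rw [Complex.ofReal_re, dsum_nm, sum_pow0, sum_pow2]; ring

lemma e01 : ofdmFisher N M P α φ f t 0 1 = 0 := by
  simp only [ofdmFisher, Matrix.of_apply]
  simp [p01 hP, Complex.re_sum, Complex.mul_re]

lemma e10 : ofdmFisher N M P α φ f t 1 0 = 0 := by
  simp only [ofdmFisher, Matrix.of_apply]
  simp [p10 hP, Complex.re_sum, Complex.mul_re]

lemma e02 : ofdmFisher N M P α φ f t 0 2 = 0 := by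
  simp only [ofdmFisher, Matrix.of_apply]
  simp [p02 hP, Complex.re_sum, Complex.mul_re]

lemma e20 : ofdmFisher N M P α φ f t 2 0 = 0 := by
  simp only [ofdmFisher, Matrix.of_apply]
  simp [p20 hP, Complex.re_sum, Complex.mul_re]

lemma e03 : ofdmFisher N M P α φ f t 0 3 = 0 := by
  simp only [ofdmFisher, Matrix.of_apply]
  simp [p03 hP, Complex.re_sum, Complex.mul_re]

lemma e30 : ofdmFisher N M P α φ f t 3 0 = 0 := by
  simp only [ofdmFisher, Matrix.of_apply]
  simp [p30 hP, Complex.re_sum, Complex.mul_re]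

end entries

noncomputable def Gmat (N M : ℕ) (P α : ℝ) : Matrix (Fin 4) (Fin 4) ℝ :=
    !![2*(N:ℝ)*(M:ℝ)*P, 0, 0, 0;
       0, 2*(N:ℝ)*(M:ℝ)*(P*α^2),
          2*π*(P*α^2)*(M:ℝ)*((N:ℝ)*((N:ℝ)-1)),
          -(2*π*(P*α^2)*(N:ℝ)*((M:ℝ)*((M:ℝ)-1)));
       0, 2*π*(P*α^2)*(M:ℝ)*((N:ℝ)*((N:ℝ)-1)),
          (2*π)^2*(P*α^2)*(M:ℝ)*((N:ℝ)*((N:ℝ)-1)*(2*(N:ℝ)-1))/3,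
          -((2*π)^2*(P*α^2)*((N:ℝ)*((N:ℝ)-1))*((M:ℝ)*((M:ℝ)-1))/2);
       0, -(2*π*(P*α^2)*(N:ℝ)*((M:ℝ)*((M:ℝ)-1))),
          -((2*π)^2*(P*α^2)*((N:ℝ)*((N:ℝ)-1))*((M:ℝ)*((M:ℝ)-1))/2),
          (2*π)^2*(P*α^2)*(N:ℝ)*((M:ℝ)*((M:ℝ)-1)*(2*(M:ℝ)-1))/3]

lemma fisher_eq (N M : ℕ) {P : ℝ} (hP : 0 ≤ P) (α φ f t : ℝ) :
    ofdmFisher N M P α φ f t = Gmat N M P α := by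
  ext j k
  fin_cases j <;> fin_cases k <;>
    simp [Gmat, e00 N M hP α φ f t, e01 N M hP α φ f t, e02 N M hP α φ f t, e03 N M hP α φ f t,
      e10 N M hP α φ f t, e11 N M hP α φ f t, e12 N M hP α φ f t, e13 N M hP α φ f t,
      e20 N M hP α φ f t, e21 N M hP α φ f t, e22 N M hP α φ f t, e23 N M hP α φ f t,
      e30 N M hP α φ f t, e31 N M hP α φ f t, e32 N M hP α φ f t, e33 N M hP α φ f t,
      Matrix.vecHead, Matrix.vecTail]

set_option maxHeartbeats 1000000 in
lemma Gdet (N M : ℕ) (P α : ℝ) : (Gmat N M P α).det =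
      16*((N:ℝ)*(M:ℝ)*P)*((P*α^2)^3*(2*π)^4)*(((N:ℝ)*(M:ℝ))*
        (((N:ℝ)^2*((N:ℝ)^2-1)/12)*((M:ℝ)^2*((M:ℝ)^2-1)/12))) := by
  simp [Gmat, Matrix.det_succ_row_zero, Fin.sum_univ_succ]
  ring

set_option maxHeartbeats 1000000 in
lemma Gsub (N M : ℕ) (P α : ℝ) :
    (Gmat N M P α).submatrix (3 : Fin 4).succAbove (3 : Fin 4).succAbove =
    !![2*(N:ℝ)*(M:ℝ)*P, 0, 0;
       0, 2*(N:ℝ)*(M:ℝ)*(P*α^2),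
          2*π*(P*α^2)*(M:ℝ)*((N:ℝ)*((N:ℝ)-1));
       0, 2*π*(P*α^2)*(M:ℝ)*((N:ℝ)*((N:ℝ)-1)),
          (2*π)^2*(P*α^2)*(M:ℝ)*((N:ℝ)*((N:ℝ)-1)*(2*(N:ℝ)-1))/3] := by
  rw [show (3 : Fin 4) = Fin.last 3 from rfl, Fin.succAbove_last]
  ext i j
  fin_cases i <;> fin_cases j <;>
    simp [Gmat, Matrix.submatrix_apply, Fin.castSucc, Fin.castAdd, Fin.castLE,
      Matrix.vecHead, Matrix.vecTail]

set_option maxHeartbeats 1000000 in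
lemma Gadj (N M : ℕ) (P α : ℝ) : (Gmat N M P α).adjugate 3 3 =
      8*((N:ℝ)*(M:ℝ)*P)*((2*π)^2*(P*α^2)^2)*((M:ℝ)^2*((N:ℝ)^2*((N:ℝ)^2-1)/12)) := by
  rw [Matrix.adjugate_fin_succ_eq_det_submatrix, Gsub, Matrix.det_fin_three]
  norm_num [Matrix.vecHead, Matrix.vecTail, Matrix.cons_val_two]
  ring

/-- Cramér-Rao lower bound for the normalized delay `t` in OFDM radar with
constant envelope `A_{n,m} = √P`: the Fisher information matrix is invertible and
`[I(θ)⁻¹]_{tt} = 6 / ((2π)² α² P · N M (M² − 1))`. -/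
theorem ofdm_crlb_delay
    (N M : ℕ) (hN : 2 ≤ N) (hM : 2 ≤ M) (P : ℝ) (hP : 0 < P)
    (α φ f t : ℝ) (hα : 0 < α) :
    IsUnit (ofdmFisher N M P α φ f t).det ∧
    (ofdmFisher N M P α φ f t)⁻¹ 3 3 =
      6 / ((2 * π) ^ 2 * α ^ 2 * P * N * M * ((M : ℝ) ^ 2 - 1)) := by
  rw [fisher_eq N M hP.le α φ f t]
  have hN2 : (2:ℝ) ≤ (N:ℝ) := by exact_mod_cast hN
  have hM2 : (2:ℝ) ≤ (M:ℝ) := by exact_mod_cast hM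
  have hN0 : (0:ℝ) < (N:ℝ) := by linarith
  have hM0 : (0:ℝ) < (M:ℝ) := by linarith
  have hNsq : (0:ℝ) < (N:ℝ)^2 - 1 := by nlinarith
  have hMsq : (0:ℝ) < (M:ℝ)^2 - 1 := by nlinarith
  have hπ : (0:ℝ) < π := Real.pi_pos
  have hdetpos : 0 < (Gmat N M P α).det := by
    rw [Gdet]
    have h1 : (0:ℝ) < 16*((N:ℝ)*(M:ℝ)*P) := by positivity
    have h2 : (0:ℝ) < (P*α^2)^3*(2*π)^4 := by positivity
    have h3 : (0:ℝ) < ((N:ℝ)*(M:ℝ))*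
        (((N:ℝ)^2*((N:ℝ)^2-1)/12)*((M:ℝ)^2*((M:ℝ)^2-1)/12)) := by
      apply mul_pos (by positivity)
      apply mul_pos <;> (apply div_pos _ (by norm_num)) <;> positivity
    exact mul_pos (mul_pos h1 h2) h3
  refine ⟨isUnit_iff_ne_zero.2 hdetpos.ne', ?_⟩
  rw [Matrix.inv_def, Matrix.smul_apply, smul_eq_mul, Ring.inverse_eq_inv', Gadj, Gdet]
  rw [eq_div_iff (by positivity)]
  rw [inv_mul_eq_div, div_mul_eq_mul_div, div_eq_iff (by positivity)]
  ring
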